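/- Let S₁ and S₂ be compactly branching WMTS with S₂ deterministic. Then the thorough and modal refinement distances coincide: d_t(S₁,S₂) = d_m(S₁,S₂). -/

import Mathlib

open scoped ENNReal

namespace WMTSQuant

/-- A closed extended-integer interval `[lo, hi]` with `lo ∈ ℤ ∪ {-∞}`,
`hi ∈ ℤ ∪ {∞}` and `lo ≤ hi`. -/
structure EInterval where
  lo : EReal
  hi : EReal
  lo_mem : lo = ⊥ ∨ ∃ n : ℤ, lo = ((n : ℝ) : EReal)
  hi_mem : hi = ⊤ ∨ ∃ n : ℤ, hi = ((n : ℝ) : EReal)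
  lo_le_hi : lo ≤ hi

/-- Specification labels 𝕂 = Σ × 𝕀. -/
abbrev SLabel (Act : Type) := Act × EInterval

/-- The refinement order ⊑ on specification labels. -/
def LabelLE {Act : Type} (k k' : SLabel Act) : Prop :=
  k.1 = k'.1 ∧ k'.2.lo ≤ k.2.lo ∧ k.2.hi ≤ k'.2.hi

/-- Implementation labels: singleton integer intervals. -/
def IsImpLabel {Act : Type} (k : SLabel Act) : Prop :=
  ∃ n : ℤ, k.2.lo = ((n : ℝ) : EReal) ∧ k.2.hi = ((n : ℝ) : EReal)

/-- Truncation of an extended real to `[0,∞]`. -/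
noncomputable def erealToNNE (x : EReal) : ℝ≥0∞ :=
  if x = ⊤ then ⊤ else ENNReal.ofReal x.toReal

open Classical in
/-- The label distance d_𝕂. -/
noncomputable def dK {Act : Type} (k ℓ : SLabel Act) : ℝ≥0∞ :=
  if k.1 = ℓ.1 then erealToNNE (max (ℓ.2.lo - k.2.lo) (max (k.2.hi - ℓ.2.hi) 0)) else ⊤

/-- Weighted modal transition systems. -/
structure WMTS (Act : Type) where
  State : Type
  init : State
  may : State → SLabel Act → State → Prop
  must : State → SLabel Act → State → Prop
  must_may : ∀ s k s', must s k s' → ∃ ℓ, LabelLE k ℓ ∧ may s ℓ s'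

variable {Act : Type}

/-- Implementations: `must = may`, all labels singleton integer intervals. -/
def WMTS.IsImplementation (S : WMTS Act) : Prop :=
  (∀ s k s', S.may s k s' ↔ S.must s k s') ∧
    ∀ s k s', S.must s k s' → IsImpLabel k

/-- (Boolean) modal refinement `S₁ ≤ₘ S₂`. -/
def Refines (S₁ S₂ : WMTS Act) : Prop :=
  ∃ R : S₁.State → S₂.State → Prop, R S₁.init S₂.init ∧
    ∀ s₁ s₂, R s₁ s₂ →
      (∀ k₁ t₁, S₁.may s₁ k₁ t₁ →
        ∃ k₂ t₂, S₂.may s₂ k₂ t₂ ∧ LabelLE k₁ k₂ ∧ R t₁ t₂) ∧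
      (∀ k₂ t₂, S₂.must s₂ k₂ t₂ →
        ∃ k₁ t₁, S₁.must s₁ k₁ t₁ ∧ LabelLE k₁ k₂ ∧ R t₁ t₂)

/-- Implementation semantics ⟦S⟧. -/
def Impl (S : WMTS Act) : Set (WMTS Act) :=
  {I | I.IsImplementation ∧ Refines I S}

/-- The endofunction whose least fixed point is the modal refinement distance. -/
noncomputable def dmF (lam : ℝ≥0∞) (S₁ S₂ : WMTS Act) :
    (S₁.State → S₂.State → ℝ≥0∞) →o (S₁.State → S₂.State → ℝ≥0∞) where
  toFun f := fun s₁ s₂ =>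
    max
      (⨆ k₁, ⨆ t₁, ⨆ _ : S₁.may s₁ k₁ t₁,
        ⨅ k₂, ⨅ t₂, ⨅ _ : S₂.may s₂ k₂ t₂, dK k₁ k₂ + lam * f t₁ t₂)
      (⨆ k₂, ⨆ t₂, ⨆ _ : S₂.must s₂ k₂ t₂,
        ⨅ k₁, ⨅ t₁, ⨅ _ : S₁.must s₁ k₁ t₁, dK k₁ k₂ + lam * f t₁ t₂)
  monotone' := by
    intro f g hfg s₁ s₂
    dsimp only
    gcongr with k₁ t₁ h k₂ t₂ h' k₂ t₂ h k₁ t₁ h' <;> exact hfg _ _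

/-- The modal refinement distance between states. -/
noncomputable def dm (lam : ℝ≥0∞) (S₁ S₂ : WMTS Act) :
    S₁.State → S₂.State → ℝ≥0∞ :=
  OrderHom.lfp (dmF lam S₁ S₂)

/-- The modal refinement distance between systems. -/
noncomputable def dmInit (lam : ℝ≥0∞) (S₁ S₂ : WMTS Act) : ℝ≥0∞ :=
  dm lam S₁ S₂ S₁.init S₂.init

/-- The endofunction whose least fixed point is the implementation distance. -/
noncomputable def diF (lam : ℝ≥0∞) (I₁ I₂ : WMTS Act) :
    (I₁.State → I₂.State → ℝ≥0∞) →o (I₁.State → I₂.State → ℝ≥0∞) where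
  toFun f := fun i₁ i₂ =>
    max
      (⨆ k₁, ⨆ j₁, ⨆ _ : I₁.must i₁ k₁ j₁,
        ⨅ k₂, ⨅ j₂, ⨅ _ : I₂.must i₂ k₂ j₂, dK k₁ k₂ + lam * f j₁ j₂)
      (⨆ k₂, ⨆ j₂, ⨆ _ : I₂.must i₂ k₂ j₂,
        ⨅ k₁, ⨅ j₁, ⨅ _ : I₁.must i₁ k₁ j₁, dK k₁ k₂ + lam * f j₁ j₂)
  monotone' := by
    intro f g hfg i₁ i₂
    dsimp only
    gcongr with k₁ t₁ h k₂ t₂ h' k₂ t₂ h k₁ t₁ h' <;> exact hfg _ _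

/-- The implementation distance between states of implementations. -/
noncomputable def di (lam : ℝ≥0∞) (I₁ I₂ : WMTS Act) :
    I₁.State → I₂.State → ℝ≥0∞ :=
  OrderHom.lfp (diF lam I₁ I₂)

/-- The implementation distance between implementations. -/
noncomputable def diInit (lam : ℝ≥0∞) (I₁ I₂ : WMTS Act) : ℝ≥0∞ :=
  di lam I₁ I₂ I₁.init I₂.init

/-- The thorough refinement distance. -/
noncomputable def dt (lam : ℝ≥0∞) (S₁ S₂ : WMTS Act) : ℝ≥0∞ :=
  ⨆ I₁ ∈ Impl S₁, ⨅ I₂ ∈ Impl S₂, diInit lam I₁ I₂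


/-- Pointwise sum of intervals. -/
noncomputable def EInterval.add (I J : EInterval) : EInterval where
  lo := I.lo + J.lo
  hi := I.hi + J.hi
  lo_mem := by
    rcases I.lo_mem with h | ⟨n, h⟩
    · exact Or.inl (by rw [h, EReal.bot_add])
    · rcases J.lo_mem with h' | ⟨m, h'⟩
      · exact Or.inl (by rw [h', EReal.add_bot])
      · exact Or.inr ⟨n + m, by rw [h, h', ← EReal.coe_add]; norm_cast⟩
  hi_mem := by
    rcases I.hi_mem with h | ⟨n, h⟩
    · exact Or.inl (by rw [h, EReal.top_add_of_ne_bot]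
                       rcases J.hi_mem with h' | ⟨m, h'⟩ <;> simp [h'])
    · rcases J.hi_mem with h' | ⟨m, h'⟩
      · exact Or.inl (by rw [h', EReal.add_top_of_ne_bot]; simp [h])
      · exact Or.inr ⟨n + m, by rw [h, h', ← EReal.coe_add]; norm_cast⟩
  lo_le_hi := add_le_add I.lo_le_hi J.lo_le_hi

/-- Widening `I ± δ` of an interval. -/
noncomputable def EInterval.widen (I : EInterval) (δ : ℕ) : EInterval where
  lo := I.lo - ((δ : ℝ) : EReal)
  hi := I.hi + ((δ : ℝ) : EReal)
  lo_mem := by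
    rcases I.lo_mem with h | ⟨n, h⟩
    · exact Or.inl (by rw [h, EReal.bot_sub])
    · exact Or.inr ⟨n - δ, by rw [h, ← EReal.coe_sub]; norm_cast⟩
  hi_mem := by
    rcases I.hi_mem with h | ⟨n, h⟩
    · exact Or.inl (by rw [h, EReal.top_add_of_ne_bot (EReal.coe_ne_bot _)])
    · exact Or.inr ⟨n + δ, by rw [h, ← EReal.coe_add]; norm_cast⟩
  lo_le_hi := by
    refine le_trans ?_ (le_trans I.lo_le_hi ?_)
    · rw [sub_eq_add_neg]
      nth_rewrite 2 [show I.lo = I.lo + 0 by rw [add_zero]]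
      refine add_le_add le_rfl ?_
      rw [← EReal.coe_neg, ← EReal.coe_zero, EReal.coe_le_coe_iff]
      simp
    · nth_rewrite 1 [show I.hi = I.hi + 0 by rw [add_zero]]
      refine add_le_add le_rfl ?_
      rw [← EReal.coe_zero, EReal.coe_le_coe_iff]
      simp



/-- Symmetrization of a hemimetric. -/
noncomputable def symDist {α : Type*} (d : α → α → ℝ≥0∞) : α → α → ℝ≥0∞ :=
  fun x y => max (d x y) (d y x)

/-- Product distance. -/
noncomputable def prodDist {α β : Type*} (d : α → α → ℝ≥0∞) (e : β → β → ℝ≥0∞) :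
    α × β → α × β → ℝ≥0∞ :=
  fun p q => d p.1 q.1 + e p.2 q.2

/-- (Sequential) compactness of a set with respect to an `ℝ≥0∞`-valued distance. -/
def CompactIn {α : Type*} (d : α → α → ℝ≥0∞) (A : Set α) : Prop :=
  ∀ u : ℕ → α, (∀ n, u n ∈ A) →
    ∃ x ∈ A, ∃ φ : ℕ → ℕ, StrictMono φ ∧
      Filter.Tendsto (fun n => d x (u (φ n))) Filter.atTop (nhds 0)

/-- Compactly branching WMTS. -/
def CompactlyBranching (lam : ℝ≥0∞) (S : WMTS Act) : Prop :=
  ∀ s : S.State,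
    CompactIn (prodDist (symDist (dm lam S S)) (symDist dK))
      {p : S.State × SLabel Act | S.may s p.2 p.1} ∧
    CompactIn (prodDist (symDist (dm lam S S)) (symDist dK))
      {p : S.State × SLabel Act | S.must s p.2 p.1}

/-- Deterministic WMTS. -/
def Deterministic (S : WMTS Act) : Prop :=
  ∀ (s : S.State) (a : Act) (I₁ I₂ : EInterval) (t₁ t₂ : S.State),
    S.may s (a, I₁) t₁ → S.may s (a, I₂) t₂ → I₁ = I₂ ∧ t₁ = t₂

/-- `S'` is an ε-relaxation of `S`. -/
def Relaxation (lam ε : ℝ≥0∞) (S S' : WMTS Act) : Prop :=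
  Refines S S' ∧ dmInit lam S' S ≤ ε

/-- The ε-extended implementation semantics ⟦S⟧⁺ᵉ. -/
def ImplExt (lam ε : ℝ≥0∞) (S : WMTS Act) : Set (WMTS Act) :=
  {I | I.IsImplementation ∧ dmInit lam I S ≤ ε}

/-- The δ-widening S⁺δ of a WMTS. -/
noncomputable def WMTS.widen (S : WMTS Act) (δ : ℕ) : WMTS Act where
  State := S.State
  init := S.init
  may s k t := ∃ a I, S.may s (a, I) t ∧ k = (a, I.widen δ)
  must s k t := ∃ a I, S.must s (a, I) t ∧ k = (a, I.widen δ)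
  must_may := by
    rintro s k t ⟨a, I, h, rfl⟩
    obtain ⟨ℓ, hle, hmay⟩ := S.must_may _ _ _ h
    refine ⟨(ℓ.1, ℓ.2.widen δ), ⟨hle.1, ?_, ?_⟩, ℓ.1, ℓ.2, hmay, rfl⟩
    · exact EReal.sub_le_sub hle.2.1 le_rfl
    · exact add_le_add hle.2.2 le_rfl

/-- Definedness of label synchronization ⊕. -/
def OplusDefined (k ℓ : SLabel Act) : Prop := k.1 = ℓ.1

/-- Label synchronization ⊕ (adding the intervals). -/
noncomputable def oplus (k ℓ : SLabel Act) : SLabel Act :=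
  (k.1, k.2.add ℓ.2)

/-- Definedness of label quotient ⊖ (equal actions, the difference interval is a
valid extended-integer interval). -/
def OminusDefined (k ℓ : SLabel Act) : Prop :=
  k.1 = ℓ.1 ∧ k.2.lo - ℓ.2.lo ≤ k.2.hi - ℓ.2.hi ∧
    (k.2.lo - ℓ.2.lo = ⊥ ∨ ∃ n : ℤ, k.2.lo - ℓ.2.lo = ((n : ℝ) : EReal)) ∧
    (k.2.hi - ℓ.2.hi = ⊤ ∨ ∃ n : ℤ, k.2.hi - ℓ.2.hi = ((n : ℝ) : EReal))

/-- Label quotient ⊖. -/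
noncomputable def ominus (k ℓ : SLabel Act) (h : OminusDefined k ℓ) : SLabel Act :=
  (k.1, ⟨k.2.lo - ℓ.2.lo, k.2.hi - ℓ.2.hi, h.2.2.1, h.2.2.2, h.2.1⟩)

/-- Structural composition S₁ ∥ S₂ (CSP-style synchronization, adding weights). -/
noncomputable def par (S₁ S₂ : WMTS Act) : WMTS Act where
  State := S₁.State × S₂.State
  init := (S₁.init, S₂.init)
  may p k q := ∃ k₁ k₂, S₁.may p.1 k₁ q.1 ∧ S₂.may p.2 k₂ q.2 ∧
    OplusDefined k₁ k₂ ∧ k = oplus k₁ k₂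
  must p k q := ∃ k₁ k₂, S₁.must p.1 k₁ q.1 ∧ S₂.must p.2 k₂ q.2 ∧
    OplusDefined k₁ k₂ ∧ k = oplus k₁ k₂
  must_may := by
    rintro p k q ⟨k₁, k₂, h₁, h₂, hd, rfl⟩
    obtain ⟨ℓ₁, hle₁, hmay₁⟩ := S₁.must_may _ _ _ h₁
    obtain ⟨ℓ₂, hle₂, hmay₂⟩ := S₂.must_may _ _ _ h₂
    refine ⟨oplus ℓ₁ ℓ₂, ⟨?_, ?_, ?_⟩,
      ℓ₁, ℓ₂, hmay₁, hmay₂, by rw [OplusDefined, ← hle₁.1, ← hle₂.1]; exact hd, rfl⟩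
    · exact hle₁.1
    · exact add_le_add hle₁.2.1 hle₂.2.1
    · exact add_le_add hle₁.2.2 hle₂.2.2

section Quotient

variable (S₁ S₂ : WMTS Act)

/-- May transitions of the (unpruned) quotient; `none` is the universal state u. -/
def qmay : Option (S₁.State × S₂.State) → SLabel Act → Option (S₁.State × S₂.State) → Prop
  | some p, k, some q =>
      (∃ k₁ k₂, ∃ h : OminusDefined k₁ k₂,
        S₁.may p.1 k₁ q.1 ∧ S₂.may p.2 k₂ q.2 ∧ k = ominus k₁ k₂ h) ∨
      (∃ k₁ k₂, ∃ h : OminusDefined k₁ k₂,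
        S₁.must p.1 k₁ q.1 ∧ S₂.must p.2 k₂ q.2 ∧ k = ominus k₁ k₂ h)
  | some p, k, none => ∀ k₂ t₂, S₂.may p.2 k₂ t₂ → ¬ OplusDefined k k₂
  | none, _, none => True
  | none, _, some _ => False

/-- Must transitions of the (unpruned) quotient. -/
def qmust : Option (S₁.State × S₂.State) → SLabel Act → Option (S₁.State × S₂.State) → Prop
  | some p, k, some q =>
      ∃ k₁ k₂, ∃ h : OminusDefined k₁ k₂,
        S₁.must p.1 k₁ q.1 ∧ S₂.must p.2 k₂ q.2 ∧ k = ominus k₁ k₂ h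
  | _, _, _ => False

/-- Inconsistent states of the quotient. -/
def QBad : Option (S₁.State × S₂.State) → Prop
  | some p => ∃ k₁ t₁, S₁.must p.1 k₁ t₁ ∧
      ∀ k₂ t₂, S₂.must p.2 k₂ t₂ → ¬ OminusDefined k₁ k₂
  | none => False

/-- States removed by pruning: those that can reach an inconsistent state via
must transitions (reflexive-transitive closure of `pre`). -/
def QPruned (p : Option (S₁.State × S₂.State)) : Prop :=
  ∃ q, Relation.ReflTransGen (fun x y => ∃ k, qmust S₁ S₂ x k y) p q ∧ QBad S₁ S₂ q

/-- The quotient S₁ ⫽ S₂, defined whenever the initial state survives pruning. -/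
noncomputable def quotient' (h : ¬ QPruned S₁ S₂ (some (S₁.init, S₂.init))) :
    WMTS Act where
  State := {p : Option (S₁.State × S₂.State) // ¬ QPruned S₁ S₂ p}
  init := ⟨some (S₁.init, S₂.init), h⟩
  may p k q := qmay S₁ S₂ p.1 k q.1
  must p k q := qmust S₁ S₂ p.1 k q.1
  must_may := by
    rintro ⟨p, hp⟩ k ⟨q, hq⟩ hmust
    refine ⟨k, ⟨rfl, le_rfl, le_rfl⟩, ?_⟩
    cases p with
    | none => exact hmust.elim
    | some p =>
      cases q with
      | none => exact hmust.elim
      | some q => exact Or.inr hmust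

end Quotient

/-- Formulae of the logic L. -/
inductive Formula (Act : Type) where
  | tt : Formula Act
  | ff : Formula Act
  | diam : SLabel Act → Formula Act → Formula Act
  | box : SLabel Act → Formula Act → Formula Act
  | and : Formula Act → Formula Act → Formula Act
  | or : Formula Act → Formula Act → Formula Act

/-- Disjunction-free formulae. -/
def Formula.DisjFree : Formula Act → Prop
  | .tt => True
  | .ff => True
  | .diam _ φ => φ.DisjFree
  | .box _ φ => φ.DisjFree
  | .and φ ψ => φ.DisjFree ∧ ψ.DisjFree
  | .or _ _ => False

/-- Quantitative semantics ⟦φ⟧ : S → [0,∞] of the logic L. -/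
noncomputable def sem (lam : ℝ≥0∞) (S : WMTS Act) : Formula Act → S.State → ℝ≥0∞
  | .tt, _ => 0
  | .ff, _ => ⊤
  | .and φ ψ, s => max (sem lam S φ s) (sem lam S ψ s)
  | .or φ ψ, s => min (sem lam S φ s) (sem lam S ψ s)
  | .diam ℓ φ, s =>
      ⨅ k, ⨅ t, ⨅ _ : S.must s k t ∧ dK k ℓ ≠ ⊤, dK k ℓ + lam * sem lam S φ t
  | .box ℓ φ, s =>
      ⨆ k, ⨆ t, ⨆ _ : S.may s k t ∧ dK k ℓ ≠ ⊤, dK k ℓ + lam * sem lam S φ t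

/-- ⟦φ⟧S = ⟦φ⟧s⁰. -/
noncomputable def semInit (lam : ℝ≥0∞) (S : WMTS Act) (φ : Formula Act) : ℝ≥0∞ :=
  sem lam S φ S.init


/-! ### Auxiliary lemmas -/

section Aux

variable {Act : Type}

/-- The singleton interval `[n,n]`. -/
noncomputable def pointIv (n : ℤ) : EInterval :=
  ⟨((n : ℝ) : EReal), ((n : ℝ) : EReal), Or.inr ⟨n, rfl⟩, Or.inr ⟨n, rfl⟩, le_rfl⟩

lemma labelLE_refl (k : SLabel Act) : LabelLE k k := ⟨rfl, le_rfl, le_rfl⟩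

lemma labelLE_trans {a b c : SLabel Act} (h1 : LabelLE a b) (h2 : LabelLE b c) :
    LabelLE a c :=
  ⟨h1.1.trans h2.1, h2.2.1.trans h1.2.1, h1.2.2.trans h2.2.2⟩

lemma EInterval.ext' {I J : EInterval} (h1 : I.lo = J.lo) (h2 : I.hi = J.hi) : I = J := by
  cases I; cases J; cases h1; cases h2; rfl

lemma exists_pt (I : EInterval) :
    ∃ n : ℤ, I.lo ≤ ((n : ℝ) : EReal) ∧ ((n : ℝ) : EReal) ≤ I.hi := by
  rcases I.lo_mem with h | ⟨n, h⟩
  · rcases I.hi_mem with h' | ⟨m, h'⟩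
    · exact ⟨0, by rw [h]; exact bot_le, by rw [h']; exact le_top⟩
    · exact ⟨m, by rw [h]; exact bot_le, by rw [h']⟩
  · exact ⟨n, by rw [h], by rw [← h]; exact I.lo_le_hi⟩

lemma exists_pt_label (a : Act) (I : EInterval) :
    ∃ n : ℤ, LabelLE (a, pointIv n) (a, I) := by
  obtain ⟨n, h1, h2⟩ := exists_pt I
  exact ⟨n, rfl, h1, h2⟩

lemma impl_label_eq {k : SLabel Act} (h : IsImpLabel k) :
    ∃ n : ℤ, k = (k.1, pointIv n) := by
  obtain ⟨n, h1, h2⟩ := h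
  exact ⟨n, Prod.ext rfl (EInterval.ext' h1 h2)⟩

lemma erealToNNE_mono : Monotone erealToNNE := by
  intro x y hxy
  unfold erealToNNE
  rcases eq_or_ne y ⊤ with rfl | hy
  · simp
  · rw [if_neg hy, if_neg (fun hx => hy (top_le_iff.mp (le_of_eq_of_le hx.symm hxy)))]
    rcases eq_or_ne x ⊥ with rfl | hxb
    · simp [EReal.toReal_bot]
    · exact ENNReal.ofReal_le_ofReal (EReal.toReal_le_toReal hxy hxb hy)

lemma erealToNNE_top : erealToNNE ⊤ = ⊤ := by simp [erealToNNE]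

lemma erealToNNE_zero : erealToNNE 0 = 0 := by simp [erealToNNE]

lemma erealToNNE_max (x y : EReal) :
    erealToNNE (max x y) = max (erealToNNE x) (erealToNNE y) := by
  rcases max_cases x y with ⟨h1, h2⟩ | ⟨h1, h2⟩
  · rw [h1]; exact (max_eq_left (erealToNNE_mono h2)).symm
  · rw [h1]; exact (max_eq_right (erealToNNE_mono h2.le)).symm

lemma dK_top_of_ne {k ℓ : SLabel Act} (h : k.1 ≠ ℓ.1) : dK k ℓ = ⊤ := by
  simp [dK, h]

lemma act_eq_of_dK_ne_top {k ℓ : SLabel Act} (h : dK k ℓ ≠ ⊤) : k.1 = ℓ.1 := by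
  by_contra hne
  exact h (dK_top_of_ne hne)

lemma dK_eq_of_act {k ℓ : SLabel Act} (h : k.1 = ℓ.1) :
    dK k ℓ = erealToNNE (max (ℓ.2.lo - k.2.lo) (max (k.2.hi - ℓ.2.hi) 0)) := by
  simp [dK, h]

lemma dK_mono_left {k' k ℓ : SLabel Act} (h : LabelLE k' k) : dK k' ℓ ≤ dK k ℓ := by
  rcases eq_or_ne k.1 ℓ.1 with hk | hk
  · rw [dK_eq_of_act (h.1.trans hk), dK_eq_of_act hk]
    refine erealToNNE_mono (max_le_max (EReal.sub_le_sub le_rfl h.2.1)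
      (max_le_max (EReal.sub_le_sub h.2.2 le_rfl) le_rfl))
  · rw [dK_top_of_ne hk]; exact le_top

lemma dK_mono_right {k ℓ ℓ' : SLabel Act} (h : LabelLE ℓ ℓ') : dK k ℓ' ≤ dK k ℓ := by
  rcases eq_or_ne k.1 ℓ.1 with hk | hk
  · rw [dK_eq_of_act hk, dK_eq_of_act (hk.trans h.1)]
    refine erealToNNE_mono (max_le_max (EReal.sub_le_sub h.2.1 le_rfl)
      (max_le_max (EReal.sub_le_sub le_rfl h.2.2) le_rfl))
  · rw [dK_top_of_ne hk]; exact le_top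

lemma dK_pt_self (a : Act) (n : ℤ) : dK ((a, pointIv n) : SLabel Act) (a, pointIv n) = 0 := by
  rw [dK_eq_of_act rfl]
  simp only [pointIv]
  rw [show ((n:ℝ):EReal) - ((n:ℝ):EReal) = 0 by
    rw [← EReal.coe_sub]; norm_num]
  simp [erealToNNE_zero]

end Aux
section Aux2

variable {Act : Type}

lemma erealToNNE_coe (r : ℝ) : erealToNNE ((r : ℝ) : EReal) = ENNReal.ofReal r := by
  rw [erealToNNE, if_neg (EReal.coe_ne_top r), EReal.toReal_coe]

lemma dK_pt_clamp (a : Act) (n : ℤ) (J : EInterval) :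
    ∃ m : ℤ, LabelLE ((a, pointIv m) : SLabel Act) (a, J) ∧
      dK ((a, pointIv n) : SLabel Act) (a, pointIv m) ≤ dK ((a, pointIv n) : SLabel Act) (a, J) := by
  by_cases hlo : J.lo ≤ ((n : ℝ) : EReal)
  · by_cases hhi : ((n : ℝ) : EReal) ≤ J.hi
    · exact ⟨n, ⟨rfl, hlo, hhi⟩, by rw [dK_pt_self]; exact zero_le⟩
    · -- n > J.hi, so J.hi is an integer V
      have hne : J.hi ≠ ⊤ := fun h => hhi (h ▸ le_top)
      rcases J.hi_mem with h | ⟨V, hV⟩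
      · exact absurd h hne
      refine ⟨V, ⟨rfl, by rw [show ((pointIv V).lo) = ((V:ℝ):EReal) from rfl, ← hV]; exact J.lo_le_hi,
        by rw [show ((pointIv V).hi) = ((V:ℝ):EReal) from rfl, ← hV]⟩, ?_⟩
      rw [dK_eq_of_act (show ((a, pointIv n) : SLabel Act).1 = ((a, pointIv V) : SLabel Act).1 from rfl),
        dK_eq_of_act (show ((a, pointIv n) : SLabel Act).1 = ((a, J) : SLabel Act).1 from rfl)]
      refine erealToNNE_mono ?_
      refine max_le ?_ (max_le ?_ (le_max_of_le_right (le_max_right _ _)))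
      · -- (pointIv V).lo - n ≤ RHS ; pointIv V .lo = V and n > V so V - n ≤ 0
        have hVn : ((V:ℝ):EReal) - ((n:ℝ):EReal) ≤ 0 := by
          have h1 : ((V:ℝ):EReal) < ((n:ℝ):EReal) := by rw [← hV]; exact lt_of_not_ge hhi
          have h2 : (V:ℝ) < (n:ℝ) := by exact_mod_cast h1
          rw [← EReal.coe_sub, ← EReal.coe_zero, EReal.coe_le_coe_iff]
          linarith
        exact le_trans hVn (le_max_of_le_right (le_max_right _ _))
      · -- n - V ≤ max(J.lo - n, max(n - J.hi, 0)) since J.hi = V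
        rw [show ((pointIv V).hi) = ((V:ℝ):EReal) from rfl, ← hV]
        exact le_max_of_le_right (le_max_left _ _)
  · -- n < J.lo, so J.lo is an integer U
    have hne : J.lo ≠ ⊥ := fun h => hlo (h ▸ bot_le)
    rcases J.lo_mem with h | ⟨U, hU⟩
    · exact absurd h hne
    refine ⟨U, ⟨rfl, by rw [show ((pointIv U).lo) = ((U:ℝ):EReal) from rfl, ← hU],
      by rw [show ((pointIv U).hi) = ((U:ℝ):EReal) from rfl, ← hU]; exact J.lo_le_hi⟩, ?_⟩
    rw [dK_eq_of_act (show ((a, pointIv n) : SLabel Act).1 = ((a, pointIv U) : SLabel Act).1 from rfl),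
      dK_eq_of_act (show ((a, pointIv n) : SLabel Act).1 = ((a, J) : SLabel Act).1 from rfl)]
    refine erealToNNE_mono ?_
    refine max_le ?_ (max_le ?_ (le_max_of_le_right (le_max_right _ _)))
    · rw [show ((pointIv U).lo) = ((U:ℝ):EReal) from rfl, ← hU]
      exact le_max_left _ _
    · have hnU : ((n:ℝ):EReal) - ((U:ℝ):EReal) ≤ 0 := by
        have h1 : ((n:ℝ):EReal) < ((U:ℝ):EReal) := by rw [← hU]; exact lt_of_not_ge hlo
        have h2 : (n:ℝ) < (U:ℝ) := by exact_mod_cast h1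
        rw [← EReal.coe_sub, ← EReal.coe_zero, EReal.coe_le_coe_iff]
        linarith
      exact le_trans hnU (le_max_of_le_right (le_max_right _ _))

instance nonempty_pts (k : SLabel Act) : Nonempty {n : ℤ // LabelLE ((k.1, pointIv n) : SLabel Act) k} := by
  obtain ⟨n, hn⟩ := exists_pt k.2
  exact ⟨⟨n, rfl, hn.1, hn.2⟩⟩

lemma dK_eq_iSup_pts (k ℓ : SLabel Act) :
    dK k ℓ = ⨆ p : {n : ℤ // LabelLE ((k.1, pointIv n) : SLabel Act) k},
      dK ((k.1, pointIv p.1) : SLabel Act) ℓ := by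
  refine le_antisymm ?_ (iSup_le fun p => dK_mono_left p.2)
  rcases eq_or_ne k.1 ℓ.1 with hact | hact
  · -- same action
    rw [dK_eq_of_act hact]
    rw [erealToNNE_max, erealToNNE_max, erealToNNE_zero]
    have key : ∀ n : ℤ, LabelLE ((k.1, pointIv n) : SLabel Act) k →
        ∀ z : ℝ≥0∞, z ≤ erealToNNE (max (ℓ.2.lo - ((n:ℝ):EReal)) (max (((n:ℝ):EReal) - ℓ.2.hi) 0)) →
        z ≤ ⨆ p : {n : ℤ // LabelLE ((k.1, pointIv n) : SLabel Act) k},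
          dK ((k.1, pointIv p.1) : SLabel Act) ℓ := by
      intro n hn z hz
      refine le_trans hz (le_iSup_of_le ⟨n, hn⟩
        (dK_eq_of_act (show ((k.1, pointIv n) : SLabel Act).1 = ℓ.1 from hact)).ge)
    refine max_le ?_ (max_le ?_ (zero_le))
    · -- lo part : erealToNNE (ℓ.2.lo - k.2.lo) ≤ sup
      rcases k.2.lo_mem with hx | ⟨v, hv⟩
      · rcases ℓ.2.lo_mem with hX | ⟨U, hU⟩
        · rw [hx, hX]
          rw [show (⊥ : EReal) - ⊥ = ⊥ by rw [sub_eq_add_neg]; exact EReal.bot_add _]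
          rw [show erealToNNE ⊥ = 0 by simp [erealToNNE, EReal.toReal_bot]]
          exact zero_le
        · -- k.2.lo = ⊥, ℓ.2.lo = U : difference is ⊤, sup must be ⊤
          rw [hx, hU]
          rw [show ((U:ℝ):EReal) - ⊥ = ⊤ by
            rw [sub_eq_add_neg, EReal.neg_bot]; exact EReal.add_top_of_ne_bot (EReal.coe_ne_bot _)]
          rw [erealToNNE_top]
          refine le_of_forall_lt fun c hc => ?_
          obtain ⟨M, hM⟩ := ENNReal.exists_nat_gt hc.ne
          -- choose n ≤ U - M with n in the interval
          obtain ⟨n₀, hn₀⟩ := exists_pt k.2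
          set n : ℤ := min n₀ (U - M) with hn
          have hmem : LabelLE ((k.1, pointIv n) : SLabel Act) k := by
            refine ⟨rfl, ?_, ?_⟩
            · rw [hx]; exact bot_le
            · refine le_trans ?_ hn₀.2
              show ((n:ℝ):EReal) ≤ ((n₀:ℝ):EReal)
              exact_mod_cast (min_le_left n₀ (U - M) : (min n₀ (U-M) : ℤ) ≤ n₀)
          refine lt_of_lt_of_le hM ?_
          refine key n hmem _ ?_
          have h1 : ((M:ℝ):EReal) ≤ ((U:ℝ):EReal) - ((n:ℝ):EReal) := by
            rw [← EReal.coe_sub, EReal.coe_le_coe_iff]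
            have h2 : n ≤ U - M := min_le_right _ _
            have h3 : (n:ℝ) ≤ (U:ℝ) - (M:ℝ) := by exact_mod_cast h2
            linarith
          calc (M : ℝ≥0∞) = ENNReal.ofReal (M:ℝ) := by
                simp [ENNReal.ofReal_natCast]
            _ = erealToNNE ((M:ℝ):EReal) := (erealToNNE_coe _).symm
            _ ≤ erealToNNE (((U:ℝ):EReal) - ((n:ℝ):EReal)) := erealToNNE_mono h1
            _ ≤ _ := by
                rw [hU]
                exact erealToNNE_mono (le_max_left _ _)
      · -- k.2.lo = v : use n := v
        have hmem : LabelLE ((k.1, pointIv v) : SLabel Act) k :=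
          ⟨rfl, by rw [show ((k.1, pointIv v) : SLabel Act).2.lo = ((v:ℝ):EReal) from rfl, ← hv],
            by rw [show ((k.1, pointIv v) : SLabel Act).2.hi = ((v:ℝ):EReal) from rfl, ← hv];
               exact k.2.lo_le_hi⟩
        refine key v hmem _ (erealToNNE_mono ?_)
        rw [← hv]
        exact le_max_of_le_left le_rfl
    · -- hi part
      rcases k.2.hi_mem with hy | ⟨w, hw⟩
      · rcases ℓ.2.hi_mem with hY | ⟨V, hV⟩
        · rw [hy, hY]
          rw [show (⊤ : EReal) - ⊤ = ⊥ by
            rw [sub_eq_add_neg, EReal.neg_top]; exact EReal.add_bot _]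
          rw [show erealToNNE ⊥ = 0 by simp [erealToNNE, EReal.toReal_bot]]
          exact zero_le
        · rw [hy, hV]
          rw [show (⊤:EReal) - ((V:ℝ):EReal) = ⊤ by
            rw [sub_eq_add_neg, ← EReal.coe_neg]; exact EReal.top_add_of_ne_bot (EReal.coe_ne_bot _)]
          rw [erealToNNE_top]
          refine le_of_forall_lt fun c hc => ?_
          obtain ⟨M, hM⟩ := ENNReal.exists_nat_gt hc.ne
          obtain ⟨n₀, hn₀⟩ := exists_pt k.2
          set n : ℤ := max n₀ (V + M) with hn
          have hmem : LabelLE ((k.1, pointIv n) : SLabel Act) k := by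
            refine ⟨rfl, ?_, ?_⟩
            · refine le_trans hn₀.1 ?_
              show ((n₀:ℝ):EReal) ≤ ((n:ℝ):EReal)
              exact_mod_cast (le_max_left n₀ (V + M) : n₀ ≤ (max n₀ (V+M) : ℤ))
            · rw [hy]; exact le_top
          refine lt_of_lt_of_le hM ?_
          refine key n hmem _ ?_
          have h1 : ((M:ℝ):EReal) ≤ ((n:ℝ):EReal) - ((V:ℝ):EReal) := by
            rw [← EReal.coe_sub, EReal.coe_le_coe_iff]
            have : V + M ≤ n := le_max_right _ _
            have : (V:ℝ) + (M:ℝ) ≤ (n:ℝ) := by exact_mod_cast this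
            linarith
          calc (M : ℝ≥0∞) = ENNReal.ofReal (M:ℝ) := by
                simp [ENNReal.ofReal_natCast]
            _ = erealToNNE ((M:ℝ):EReal) := (erealToNNE_coe _).symm
            _ ≤ erealToNNE (((n:ℝ):EReal) - ((V:ℝ):EReal)) := erealToNNE_mono h1
            _ ≤ _ := by
                rw [hV]
                exact erealToNNE_mono (le_max_of_le_right (le_max_left _ _))
      · have hmem : LabelLE ((k.1, pointIv w) : SLabel Act) k :=
          ⟨rfl, by rw [show ((k.1, pointIv w) : SLabel Act).2.lo = ((w:ℝ):EReal) from rfl, ← hw];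
                   exact k.2.lo_le_hi,
            by rw [show ((k.1, pointIv w) : SLabel Act).2.hi = ((w:ℝ):EReal) from rfl, ← hw]⟩
        refine key w hmem _ (erealToNNE_mono ?_)
        rw [← hw]
        exact le_max_of_le_right (le_max_left _ _)
  · -- distinct actions : both sides ⊤
    rw [dK_top_of_ne hact]
    obtain ⟨p⟩ := nonempty_pts k
    exact le_iSup_of_le p
      (dK_top_of_ne (show ((k.1, pointIv ↑p) : SLabel Act).1 ≠ ℓ.1 from hact)).ge

lemma exists_lt_add_of_lt_add_iSup {ι κ : Sort*} [Nonempty ι] [Nonempty κ]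
    {f : ι → ℝ≥0∞} {g : κ → ℝ≥0∞} {r : ℝ≥0∞} (h : r < (⨆ i, f i) + ⨆ j, g j) :
    ∃ i j, r < f i + g j := by
  by_contra hc
  push_neg at hc
  refine absurd h (not_lt.mpr ?_)
  rw [ENNReal.iSup_add]
  refine iSup_le fun i => ?_
  rw [ENNReal.add_iSup]
  exact iSup_le fun j => hc i j

end Aux2
section Aux3

variable {Act : Type}

/-- Rerooting a WMTS at a state. -/
def reroot (S : WMTS Act) (s : S.State) : WMTS Act :=
  { S with init := s }

/-- The conditions for a relation to witness modal refinement. -/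
def IsRef (S₁ S₂ : WMTS Act) (R : S₁.State → S₂.State → Prop) : Prop :=
  ∀ s₁ s₂, R s₁ s₂ →
    (∀ k₁ t₁, S₁.may s₁ k₁ t₁ →
      ∃ k₂ t₂, S₂.may s₂ k₂ t₂ ∧ LabelLE k₁ k₂ ∧ R t₁ t₂) ∧
    (∀ k₂ t₂, S₂.must s₂ k₂ t₂ →
      ∃ k₁ t₁, S₁.must s₁ k₁ t₁ ∧ LabelLE k₁ k₂ ∧ R t₁ t₂)

lemma refines_iff {S₁ S₂ : WMTS Act} :
    Refines S₁ S₂ ↔ ∃ R, R S₁.init S₂.init ∧ IsRef S₁ S₂ R := Iff.rfl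

/-- The canonical implementation obtained by instantiating all must
transitions with all integer points. -/
def mustClosure (S : WMTS Act) : WMTS Act where
  State := S.State
  init := S.init
  may s k t := ∃ k₀ n, S.must s k₀ t ∧ LabelLE (k₀.1, pointIv n) k₀ ∧ k = (k₀.1, pointIv n)
  must s k t := ∃ k₀ n, S.must s k₀ t ∧ LabelLE (k₀.1, pointIv n) k₀ ∧ k = (k₀.1, pointIv n)
  must_may := fun s k t h => ⟨k, labelLE_refl k, h⟩

lemma mustClosure_mem (S : WMTS Act) : mustClosure S ∈ Impl S := by
  refine ⟨⟨fun s k t => Iff.rfl, ?_⟩, Eq, rfl, ?_⟩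
  · rintro s k t ⟨k₀, n, _, _, rfl⟩
    exact ⟨n, rfl, rfl⟩
  · rintro s s₂ rfl
    constructor
    · rintro k t ⟨k₀, n, hm, hle, rfl⟩
      obtain ⟨ℓ, hl, hmay⟩ := S.must_may _ _ _ hm
      exact ⟨ℓ, t, hmay, labelLE_trans hle hl, rfl⟩
    · intro k₂ t₂ hm
      obtain ⟨n, hn⟩ := exists_pt_label k₂.1 k₂.2
      exact ⟨(k₂.1, pointIv n), t₂, ⟨k₂, n, hm, hn, rfl⟩, hn, rfl⟩

instance impl_nonempty (S : WMTS Act) : Nonempty {I : WMTS Act // I ∈ Impl S} :=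
  ⟨⟨mustClosure S, mustClosure_mem S⟩⟩

lemma reroot_mem {I S : WMTS Act} {R : I.State → S.State → Prop}
    (hI : I.IsImplementation) (hR : IsRef I S R) {j : I.State} {t : S.State}
    (hjt : R j t) : reroot I j ∈ Impl (reroot S t) :=
  ⟨hI, R, hjt, hR⟩

lemma dm_unfold (lam : ℝ≥0∞) (S₁ S₂ : WMTS Act) (s₁ : S₁.State) (s₂ : S₂.State) :
    dm lam S₁ S₂ s₁ s₂ =
      max
        (⨆ k₁, ⨆ t₁, ⨆ _ : S₁.may s₁ k₁ t₁,
          ⨅ k₂, ⨅ t₂, ⨅ _ : S₂.may s₂ k₂ t₂, dK k₁ k₂ + lam * dm lam S₁ S₂ t₁ t₂)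
        (⨆ k₂, ⨆ t₂, ⨆ _ : S₂.must s₂ k₂ t₂,
          ⨅ k₁, ⨅ t₁, ⨅ _ : S₁.must s₁ k₁ t₁, dK k₁ k₂ + lam * dm lam S₁ S₂ t₁ t₂) := by
  conv_lhs => rw [show dm lam S₁ S₂ = (dmF lam S₁ S₂) (dm lam S₁ S₂) from
    (OrderHom.map_lfp _).symm]
  rfl

lemma di_unfold (lam : ℝ≥0∞) (I₁ I₂ : WMTS Act) (i₁ : I₁.State) (i₂ : I₂.State) :
    di lam I₁ I₂ i₁ i₂ =
      max
        (⨆ k₁, ⨆ j₁, ⨆ _ : I₁.must i₁ k₁ j₁,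
          ⨅ k₂, ⨅ j₂, ⨅ _ : I₂.must i₂ k₂ j₂, dK k₁ k₂ + lam * di lam I₁ I₂ j₁ j₂)
        (⨆ k₂, ⨆ j₂, ⨆ _ : I₂.must i₂ k₂ j₂,
          ⨅ k₁, ⨅ j₁, ⨅ _ : I₁.must i₁ k₁ j₁, dK k₁ k₂ + lam * di lam I₁ I₂ j₁ j₂) := by
  conv_lhs => rw [show di lam I₁ I₂ = (diF lam I₁ I₂) (di lam I₁ I₂) from
    (OrderHom.map_lfp _).symm]
  rfl

lemma dm_le_of_prefixed {lam : ℝ≥0∞} {S₁ S₂ : WMTS Act}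
    {f : S₁.State → S₂.State → ℝ≥0∞} (h : dmF lam S₁ S₂ f ≤ f) :
    dm lam S₁ S₂ ≤ f :=
  OrderHom.lfp_le _ h

lemma di_le_of_prefixed {lam : ℝ≥0∞} {I₁ I₂ : WMTS Act}
    {f : I₁.State → I₂.State → ℝ≥0∞} (h : diF lam I₁ I₂ f ≤ f) :
    di lam I₁ I₂ ≤ f :=
  OrderHom.lfp_le _ h

lemma di_ge_left {lam : ℝ≥0∞} {I₁ I₂ : WMTS Act} {i₁ : I₁.State} {i₂ : I₂.State}
    {k₁ : SLabel Act} {j₁ : I₁.State} (h : I₁.must i₁ k₁ j₁) :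
    (⨅ k₂, ⨅ j₂, ⨅ _ : I₂.must i₂ k₂ j₂, dK k₁ k₂ + lam * di lam I₁ I₂ j₁ j₂) ≤
      di lam I₁ I₂ i₁ i₂ := by
  rw [di_unfold]
  exact le_max_of_le_left (le_iSup_of_le k₁ (le_iSup_of_le j₁ (le_iSup_of_le h le_rfl)))

lemma di_ge_right {lam : ℝ≥0∞} {I₁ I₂ : WMTS Act} {i₁ : I₁.State} {i₂ : I₂.State}
    {k₂ : SLabel Act} {j₂ : I₂.State} (h : I₂.must i₂ k₂ j₂) :
    (⨅ k₁, ⨅ j₁, ⨅ _ : I₁.must i₁ k₁ j₁, dK k₁ k₂ + lam * di lam I₁ I₂ j₁ j₂) ≤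
      di lam I₁ I₂ i₁ i₂ := by
  rw [di_unfold]
  exact le_max_of_le_right (le_iSup_of_le k₂ (le_iSup_of_le j₂ (le_iSup_of_le h le_rfl)))

/-- Embedding lemma: if `e` maps `I'` into `I` preserving and reflecting
must-transitions exactly, then `di` does not decrease under `e`. -/
lemma di_emb_le {lam : ℝ≥0∞} {I' I J : WMTS Act} (e : I'.State → I.State)
    (he : ∀ x k q, I.must (e x) k q ↔ ∃ x', I'.must x k x' ∧ q = e x') :
    ∀ x j, di lam I' J x j ≤ di lam I J (e x) j := by
  have := di_le_of_prefixed (lam := lam) (I₁ := I') (I₂ := J)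
    (f := fun x j => di lam I J (e x) j) ?_
  · exact fun x j => this x j
  intro x j
  simp only [diF, OrderHom.coe_mk]
  rw [di_unfold lam I J (e x) j]
  refine max_le_max ?_ ?_
  · refine iSup_le fun k₁ => iSup_le fun x' => iSup_le fun h => ?_
    refine le_iSup_of_le k₁ (le_iSup_of_le (e x') (le_iSup_of_le
      ((he x k₁ (e x')).mpr ⟨x', h, rfl⟩) le_rfl))
  · refine iSup_le fun k₂ => iSup_le fun j₂ => iSup_le fun h₂ => ?_
    refine le_iSup_of_le k₂ (le_iSup_of_le j₂ (le_iSup_of_le h₂ ?_))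
    refine le_iInf fun k₁ => le_iInf fun q => le_iInf fun hq => ?_
    obtain ⟨x', hx', rfl⟩ := (he x k₁ q).mp hq
    exact iInf_le_of_le k₁ (iInf_le_of_le x' (iInf_le_of_le hx' le_rfl))

end Aux3
section Aux4

variable {Act : Type}

/-- Refining the left system can only decrease the modal refinement distance. -/
lemma dm_le_of_refines {lam : ℝ≥0∞} {A B C : WMTS Act}
    {R : A.State → B.State → Prop} (hR : IsRef A B R) {a : A.State} {b : B.State}
    (hab : R a b) (c : C.State) :
    dm lam A C a c ≤ dm lam B C b c := by
  set g : A.State → C.State → ℝ≥0∞ :=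
    fun a c => ⨅ p : {b // R a b}, dm lam B C p.1 c with hg
  have hpre : dmF lam A C g ≤ g := by
    intro a' c'
    simp only [dmF, OrderHom.coe_mk, hg]
    refine le_iInf fun p => ?_
    obtain ⟨b', hab'⟩ := p
    rw [dm_unfold lam B C b' c']
    refine max_le ?_ ?_
    · refine iSup_le fun k₁ => iSup_le fun t₁ => iSup_le fun h => ?_
      obtain ⟨k₂, t₂, hmayB, hle, hrel⟩ := (hR a' b' hab').1 k₁ t₁ h
      refine le_max_of_le_left (le_iSup_of_le k₂ (le_iSup_of_le t₂ (le_iSup_of_le hmayB ?_)))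
      refine le_iInf fun kc => le_iInf fun tc => le_iInf fun hc => ?_
      refine iInf_le_of_le kc (iInf_le_of_le tc (iInf_le_of_le hc ?_))
      refine add_le_add (dK_mono_left hle) (mul_le_mul_right ?_ lam)
      exact iInf_le (fun p : {b // R t₁ b} => dm lam B C p.1 tc) ⟨t₂, hrel⟩
    · refine iSup_le fun k₂ => iSup_le fun t₂ => iSup_le fun h₂ => ?_
      refine le_max_of_le_right (le_iSup_of_le k₂ (le_iSup_of_le t₂ (le_iSup_of_le h₂ ?_)))
      refine le_iInf fun k₁' => le_iInf fun t' => le_iInf fun h' => ?_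
      obtain ⟨kA, tA, hmustA, hleA, hrelA⟩ := (hR a' b' hab').2 k₁' t' h'
      refine iInf_le_of_le kA (iInf_le_of_le tA (iInf_le_of_le hmustA ?_))
      refine add_le_add (dK_mono_left hleA) (mul_le_mul_right ?_ lam)
      exact iInf_le (fun p : {b // R tA b} => dm lam B C p.1 t₂) ⟨t', hrelA⟩
  calc dm lam A C a c ≤ g a c := dm_le_of_prefixed hpre a c
    _ ≤ dm lam B C b c := iInf_le (fun p : {b // R a b} => dm lam B C p.1 c) ⟨b, hab⟩

/-- The approximating implementation of `S₂` built from an implementation `I₁`. -/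
noncomputable def approxImpl (lam δ : ℝ≥0∞) (I₁ S₂ : WMTS Act)
    (hD : dm lam I₁ S₂ I₁.init S₂.init ≠ ⊤) : WMTS Act where
  State := {p : I₁.State × S₂.State // dm lam I₁ S₂ p.1 p.2 ≠ ⊤}
  init := ⟨(I₁.init, S₂.init), hD⟩
  may p k q :=
    (∃ k₁ k₂, I₁.must p.1.1 k₁ q.1.1 ∧ S₂.may p.1.2 k₂ q.1.2 ∧ LabelLE k k₂ ∧
      (∃ n : ℤ, k = (k₁.1, pointIv n)) ∧ dK k₁ k ≤ dK k₁ k₂ ∧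
      dK k₁ k₂ + lam * dm lam I₁ S₂ q.1.1 q.1.2 ≤ dm lam I₁ S₂ p.1.1 p.1.2 + δ) ∨
    (∃ k₁ k₂, I₁.must p.1.1 k₁ q.1.1 ∧ S₂.must p.1.2 k₂ q.1.2 ∧ LabelLE k k₂ ∧
      (∃ n : ℤ, k = (k₂.1, pointIv n)) ∧ dK k₁ k ≤ dK k₁ k₂ ∧
      dK k₁ k₂ + lam * dm lam I₁ S₂ q.1.1 q.1.2 ≤ dm lam I₁ S₂ p.1.1 p.1.2 + δ)
  must p k q :=
    (∃ k₁ k₂, I₁.must p.1.1 k₁ q.1.1 ∧ S₂.may p.1.2 k₂ q.1.2 ∧ LabelLE k k₂ ∧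
      (∃ n : ℤ, k = (k₁.1, pointIv n)) ∧ dK k₁ k ≤ dK k₁ k₂ ∧
      dK k₁ k₂ + lam * dm lam I₁ S₂ q.1.1 q.1.2 ≤ dm lam I₁ S₂ p.1.1 p.1.2 + δ) ∨
    (∃ k₁ k₂, I₁.must p.1.1 k₁ q.1.1 ∧ S₂.must p.1.2 k₂ q.1.2 ∧ LabelLE k k₂ ∧
      (∃ n : ℤ, k = (k₂.1, pointIv n)) ∧ dK k₁ k ≤ dK k₁ k₂ ∧
      dK k₁ k₂ + lam * dm lam I₁ S₂ q.1.1 q.1.2 ≤ dm lam I₁ S₂ p.1.1 p.1.2 + δ)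
  must_may := fun s k t h => ⟨k, labelLE_refl k, h⟩

lemma approxImpl_spec {lam : ℝ≥0∞} (hlam0 : 0 < lam) (hlam1 : lam < 1)
    {I₁ S₂ : WMTS Act} (hI₁ : I₁.IsImplementation)
    (hD : dm lam I₁ S₂ I₁.init S₂.init ≠ ⊤)
    {εe : ℝ≥0∞} (hε0 : εe ≠ 0) (hεtop : εe ≠ ⊤) :
    approxImpl lam ((1 - lam) * εe) I₁ S₂ hD ∈ Impl S₂ ∧
      diInit lam I₁ (approxImpl lam ((1 - lam) * εe) I₁ S₂ hD) ≤
        dm lam I₁ S₂ I₁.init S₂.init + εe := by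
  set D := dm lam I₁ S₂ with hDdef
  set δ : ℝ≥0∞ := (1 - lam) * εe with hδ
  have hδ0 : δ ≠ 0 := mul_ne_zero (tsub_pos_iff_lt.mpr hlam1).ne' hε0
  have hδtop : δ ≠ ⊤ :=
    ENNReal.mul_ne_top (lt_of_le_of_lt tsub_le_self ENNReal.one_lt_top).ne hεtop
  have hsum : δ + lam * εe = εe := by
    rw [hδ, ← add_mul, tsub_add_cancel_of_le hlam1.le, one_mul]
  have hfin : ∀ {x : ℝ≥0∞}, lam * x ≠ ⊤ → x ≠ ⊤ := by
    intro x hx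
    rintro rfl
    rw [ENNReal.mul_top hlam0.ne'] at hx
    exact hx rfl
  set T := approxImpl lam δ I₁ S₂ hD with hT
  -- a key step : given a transition obligation, the chosen transition exists
  have step : ∀ (p : T.State) (k₁ k₂ : SLabel Act) (j : I₁.State) (t₂ : S₂.State),
      I₁.must p.1.1 k₁ j →
      (dK k₁ k₂ + lam * D j t₂ < D p.1.1 p.1.2 + δ) →
      ∃ (m : ℤ) (hDj : D j t₂ ≠ ⊤), k₁.1 = k₂.1 ∧
        LabelLE (k₁.1, pointIv m) k₂ ∧ dK k₁ (k₁.1, pointIv m) ≤ dK k₁ k₂ := by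
    intro p k₁ k₂ j t₂ h₁ hval
    have hvt : dK k₁ k₂ + lam * D j t₂ < ⊤ :=
      hval.trans (ENNReal.add_lt_top.mpr ⟨p.2.lt_top, hδtop.lt_top⟩)
    have hdk : dK k₁ k₂ ≠ ⊤ := (lt_of_le_of_lt le_self_add hvt).ne
    have hDj : D j t₂ ≠ ⊤ := hfin (lt_of_le_of_lt le_add_self hvt).ne
    have hact : k₁.1 = k₂.1 := act_eq_of_dK_ne_top hdk
    obtain ⟨n, hk₁eq⟩ := impl_label_eq (hI₁.2 _ _ _ h₁)
    obtain ⟨m, hmle, hmdk⟩ := dK_pt_clamp k₁.1 n k₂.2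
    have hk2eta : ((k₁.1, k₂.2) : SLabel Act) = k₂ := by rw [hact]
    rw [hk2eta] at hmle
    rw [← hk₁eq] at hmdk
    rw [hk2eta] at hmdk
    exact ⟨m, hDj, hact, hmle, hmdk⟩
  have hmem : T ∈ Impl S₂ := by
    constructor
    · refine ⟨fun s k t => Iff.rfl, ?_⟩
      rintro s k t (⟨k₁, k₂, _, _, _, ⟨n, rfl⟩, _, _⟩ | ⟨k₁, k₂, _, _, _, ⟨n, rfl⟩, _, _⟩) <;>
        exact ⟨n, rfl, rfl⟩
    · refine ⟨fun p s => p.1.2 = s, rfl, ?_⟩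
      rintro p s rfl
      constructor
      · rintro k q (⟨k₁, k₂, _, hmay₂, hle, _, _, _⟩ | ⟨k₁, k₂, _, hmust₂, hle, _, _, _⟩)
        · exact ⟨k₂, q.1.2, hmay₂, hle, rfl⟩
        · obtain ⟨ℓ, hlℓ, hmayℓ⟩ := S₂.must_may _ _ _ hmust₂
          exact ⟨ℓ, q.1.2, hmayℓ, labelLE_trans hle hlℓ, rfl⟩
      · intro k₂ t₂ hmust₂
        have hin : (⨅ k₁, ⨅ t₁, ⨅ _ : I₁.must p.1.1 k₁ t₁, dK k₁ k₂ + lam * D t₁ t₂) ≤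
            D p.1.1 p.1.2 := by
          rw [hDdef, dm_unfold lam I₁ S₂ p.1.1 p.1.2]
          exact le_max_of_le_right
            (le_iSup_of_le k₂ (le_iSup_of_le t₂ (le_iSup_of_le hmust₂ le_rfl)))
        have hlt := lt_of_le_of_lt hin (ENNReal.lt_add_right p.2 hδ0)
        simp only [iInf_lt_iff] at hlt
        obtain ⟨k₁, j, h₁, hval⟩ := hlt
        obtain ⟨m, hDj, hact, hmle, hmdk⟩ := step p k₁ k₂ j t₂ h₁ hval
        refine ⟨(k₁.1, pointIv m), ⟨(j, t₂), hDj⟩,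
          Or.inr ⟨k₁, k₂, h₁, hmust₂, hmle, ⟨m, by rw [hact]⟩, hmdk, hval.le⟩, hmle, rfl⟩
  refine ⟨hmem, ?_⟩
  -- the quantitative bound
  classical
  set f : I₁.State → T.State → ℝ≥0∞ :=
    fun i' q => if i' = q.1.1 then D q.1.1 q.1.2 + εe else ⊤ with hf
  have key : ∀ (A B C R : ℝ≥0∞), A ≤ B → B + lam * C ≤ R + δ →
      A + lam * (C + εe) ≤ R + εe := by
    intro A B C R h1 h2
    calc A + lam * (C + εe) = (A + lam * C) + lam * εe := by rw [mul_add, add_assoc]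
      _ ≤ (R + δ) + lam * εe :=
        add_le_add_left (le_trans (add_le_add_left h1 _) h2) _
      _ = R + εe := by rw [add_assoc, hsum]
  have hpre : diF lam I₁ T f ≤ f := by
    intro i' q
    simp only [diF, OrderHom.coe_mk]
    by_cases hiq : i' = q.1.1
    · rw [show f i' q = D q.1.1 q.1.2 + εe from if_pos hiq]
      refine max_le ?_ ?_
      · refine iSup_le fun k₁ => iSup_le fun j => iSup_le fun h₁ => ?_
        have h₁' : I₁.must q.1.1 k₁ j := hiq ▸ h₁
        have hin : (⨅ k₂, ⨅ t₂, ⨅ _ : S₂.may q.1.2 k₂ t₂, dK k₁ k₂ + lam * D j t₂) ≤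
            D q.1.1 q.1.2 := by
          rw [hDdef, dm_unfold lam I₁ S₂ q.1.1 q.1.2]
          exact le_max_of_le_left
            (le_iSup_of_le k₁ (le_iSup_of_le j
              (le_iSup_of_le ((hI₁.1 _ _ _).mpr h₁') le_rfl)))
        have hlt := lt_of_le_of_lt hin (ENNReal.lt_add_right q.2 hδ0)
        simp only [iInf_lt_iff] at hlt
        obtain ⟨k₂, t₂, hmay₂, hval⟩ := hlt
        obtain ⟨m, hDj, hact, hmle, hmdk⟩ := step q k₁ k₂ j t₂ h₁' hval
        have tr : T.must q (k₁.1, pointIv m) ⟨(j, t₂), hDj⟩ :=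
          Or.inl ⟨k₁, k₂, h₁', hmay₂, hmle, ⟨m, rfl⟩, hmdk, hval.le⟩
        refine iInf_le_of_le (k₁.1, pointIv m) (iInf_le_of_le ⟨(j, t₂), hDj⟩
          (iInf_le_of_le tr ?_))
        have hfj : f j ⟨(j, t₂), hDj⟩ = D j t₂ + εe := if_pos rfl
        rw [hfj]
        exact key _ _ _ _ hmdk hval.le
      · refine iSup_le fun kk => iSup_le fun qq => iSup_le fun htr => ?_
        rcases htr with ⟨k₁, k₂, h₁, _, _, _, hmdk', hval⟩ |
          ⟨k₁, k₂, h₁, _, _, _, hmdk', hval⟩ <;>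
        · have h₁'' : I₁.must i' k₁ qq.1.1 := by rw [hiq]; exact h₁
          refine iInf_le_of_le k₁ (iInf_le_of_le qq.1.1 (iInf_le_of_le h₁'' ?_))
          have hfq : f qq.1.1 qq = D qq.1.1 qq.1.2 + εe := if_pos rfl
          rw [hfq]
          exact key _ _ _ _ hmdk' hval
    · rw [show f i' q = ⊤ from if_neg hiq]
      exact le_top
  have hdi : di lam I₁ T ≤ f := di_le_of_prefixed hpre
  have : diInit lam I₁ T ≤ f I₁.init T.init := hdi _ _
  rw [show f I₁.init T.init = D I₁.init S₂.init + εe from if_pos rfl] at this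
  exact this

end Aux4
section Dir2

variable {Act : Type}

/-- The "thorough distance between states" function. -/
noncomputable def Gfun (lam : ℝ≥0∞) (S₁ S₂ : WMTS Act) :
    S₁.State → S₂.State → ℝ≥0∞ := fun s₁ s₂ =>
  ⨆ I₁ ∈ Impl (reroot S₁ s₁), ⨅ I₂ ∈ Impl (reroot S₂ s₂), diInit lam I₁ I₂

/-- Glue for the may-side: a root with a single distinguished instantiated
may-transition into `I'`, plus the must-closure of `S₁`. -/
def glueA (S₁ : WMTS Act) (s₁ : S₁.State) (k₁ : SLabel Act) (n : ℤ)
    (I' : WMTS Act) : WMTS Act where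
  State := Unit ⊕ S₁.State ⊕ I'.State
  init := Sum.inl ()
  may p k q :=
    match p, q with
    | Sum.inl _, Sum.inr (Sum.inr x) => x = I'.init ∧ k = (k₁.1, pointIv n)
    | Sum.inl _, Sum.inr (Sum.inl t) =>
        ∃ k₀ m, S₁.must s₁ k₀ t ∧ LabelLE (k₀.1, pointIv m) k₀ ∧ k = (k₀.1, pointIv m)
    | Sum.inr (Sum.inl u), Sum.inr (Sum.inl t) =>
        ∃ k₀ m, S₁.must u k₀ t ∧ LabelLE (k₀.1, pointIv m) k₀ ∧ k = (k₀.1, pointIv m)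
    | Sum.inr (Sum.inr x), Sum.inr (Sum.inr y) => I'.must x k y
    | _, _ => False
  must p k q :=
    match p, q with
    | Sum.inl _, Sum.inr (Sum.inr x) => x = I'.init ∧ k = (k₁.1, pointIv n)
    | Sum.inl _, Sum.inr (Sum.inl t) =>
        ∃ k₀ m, S₁.must s₁ k₀ t ∧ LabelLE (k₀.1, pointIv m) k₀ ∧ k = (k₀.1, pointIv m)
    | Sum.inr (Sum.inl u), Sum.inr (Sum.inl t) =>
        ∃ k₀ m, S₁.must u k₀ t ∧ LabelLE (k₀.1, pointIv m) k₀ ∧ k = (k₀.1, pointIv m)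
    | Sum.inr (Sum.inr x), Sum.inr (Sum.inr y) => I'.must x k y
    | _, _ => False
  must_may := fun s k t h => ⟨k, labelLE_refl k, h⟩

lemma glueA_emb (S₁ : WMTS Act) (s₁ : S₁.State) (k₁ : SLabel Act) (n : ℤ)
    (I' : WMTS Act) (x : I'.State) (k : SLabel Act)
    (q : (glueA S₁ s₁ k₁ n I').State) :
    (glueA S₁ s₁ k₁ n I').must (Sum.inr (Sum.inr x)) k q ↔
      ∃ y, I'.must x k y ∧ q = Sum.inr (Sum.inr y) := by
  constructor
  · intro h
    rcases q with _ | (t | y)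
    · exact h.elim
    · exact h.elim
    · exact ⟨y, h, rfl⟩
  · rintro ⟨y, hm, rfl⟩
    exact hm

lemma glueA_mem {S₁ : WMTS Act} {s₁ : S₁.State} {k₁ : SLabel Act} {t₁ : S₁.State}
    {n : ℤ} {I' : WMTS Act} (h1 : S₁.may s₁ k₁ t₁)
    (hn : LabelLE (k₁.1, pointIv n) k₁) (hI' : I' ∈ Impl (reroot S₁ t₁)) :
    glueA S₁ s₁ k₁ n I' ∈ Impl (reroot S₁ s₁) := by
  obtain ⟨⟨hiff', hlab'⟩, R', hR'init, hR'⟩ := hI'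
  constructor
  · -- IsImplementation
    refine ⟨fun s k t => Iff.rfl, ?_⟩
    intro p k q h
    rcases p with _ | (u | x) <;> rcases q with _ | (t | y) <;>
      first
        | exact h.elim
        | (exact h.2 ▸ ⟨n, rfl, rfl⟩)
        | (obtain ⟨k₀, m, _, _, rfl⟩ := h; exact ⟨m, rfl, rfl⟩)
        | exact hlab' _ _ _ h
  · -- Refines
    refine ⟨fun p s => match p with
      | Sum.inl _ => s = s₁
      | Sum.inr (Sum.inl u) => s = u
      | Sum.inr (Sum.inr x) => R' x s, rfl, ?_⟩
    intro p s hps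
    constructor
    · -- may direction
      intro k q hkq
      rcases p with _ | (u | x) <;> rcases q with _ | (t | y)
      case inl.inl => exact hkq.elim
      case inl.inr.inl =>
        obtain ⟨k₀, m, hm, hle, rfl⟩ := hkq
        rw [show s = s₁ from hps]
        obtain ⟨ℓ, hlℓ, hmayℓ⟩ := S₁.must_may _ _ _ hm
        exact ⟨ℓ, t, hmayℓ, labelLE_trans hle hlℓ, rfl⟩
      case inl.inr.inr =>
        obtain ⟨rfl, rfl⟩ := hkq
        rw [show s = s₁ from hps]
        exact ⟨k₁, t₁, h1, hn, hR'init⟩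
      case inr.inl.inl => exact hkq.elim
      case inr.inl.inr.inl =>
        obtain ⟨k₀, m, hm, hle, rfl⟩ := hkq
        rw [show s = u from hps]
        obtain ⟨ℓ, hlℓ, hmayℓ⟩ := S₁.must_may _ _ _ hm
        exact ⟨ℓ, t, hmayℓ, labelLE_trans hle hlℓ, rfl⟩
      case inr.inl.inr.inr => exact hkq.elim
      case inr.inr.inl => exact hkq.elim
      case inr.inr.inr.inl => exact hkq.elim
      case inr.inr.inr.inr =>
        obtain ⟨k₂, t₂, hmay₂, hle₂, hrel₂⟩ :=
          (hR' x s hps).1 k y ((hiff' _ _ _).mpr hkq)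
        exact ⟨k₂, t₂, hmay₂, hle₂, hrel₂⟩
    · -- must direction
      intro k₂ t₂ h₂
      rcases p with _ | (u | x)
      · rw [show s = s₁ from hps] at h₂
        obtain ⟨m, hm⟩ := exists_pt_label k₂.1 k₂.2
        exact ⟨(k₂.1, pointIv m), Sum.inr (Sum.inl t₂), ⟨k₂, m, h₂, hm, rfl⟩, hm, rfl⟩
      · rw [show s = u from hps] at h₂
        obtain ⟨m, hm⟩ := exists_pt_label k₂.1 k₂.2
        exact ⟨(k₂.1, pointIv m), Sum.inr (Sum.inl t₂), ⟨k₂, m, h₂, hm, rfl⟩, hm, rfl⟩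
      · obtain ⟨k', y, hmust', hle', hrel'⟩ := (hR' x s hps).2 k₂ t₂ h₂
        exact ⟨k', Sum.inr (Sum.inr y), hmust', hle', hrel'⟩

/-- Glue for the must-side: a root with one instantiated transition per
must-transition of `s₁`, each into its own implementation. -/
def glueB (S₁ : WMTS Act) (s₁ : S₁.State)
    (np : {μ : SLabel Act × S₁.State // S₁.must s₁ μ.1 μ.2} → ℤ)
    (Imp : {μ : SLabel Act × S₁.State // S₁.must s₁ μ.1 μ.2} → WMTS Act) :
    WMTS Act where
  State := Unit ⊕ Σ μ : {μ : SLabel Act × S₁.State // S₁.must s₁ μ.1 μ.2}, (Imp μ).State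
  init := Sum.inl ()
  may p k q :=
    match p, q with
    | Sum.inl _, Sum.inr ⟨μ, x⟩ => x = (Imp μ).init ∧ k = (μ.1.1.1, pointIv (np μ))
    | Sum.inr ⟨μ, x⟩, Sum.inr ⟨μ', y⟩ => ∃ h : μ = μ', (Imp μ').must (h ▸ x) k y
    | _, _ => False
  must p k q :=
    match p, q with
    | Sum.inl _, Sum.inr ⟨μ, x⟩ => x = (Imp μ).init ∧ k = (μ.1.1.1, pointIv (np μ))
    | Sum.inr ⟨μ, x⟩, Sum.inr ⟨μ', y⟩ => ∃ h : μ = μ', (Imp μ').must (h ▸ x) k y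
    | _, _ => False
  must_may := fun s k t h => ⟨k, labelLE_refl k, h⟩

lemma glueB_emb (S₁ : WMTS Act) (s₁ : S₁.State)
    (np : {μ : SLabel Act × S₁.State // S₁.must s₁ μ.1 μ.2} → ℤ)
    (Imp : {μ : SLabel Act × S₁.State // S₁.must s₁ μ.1 μ.2} → WMTS Act)
    (μ : {μ : SLabel Act × S₁.State // S₁.must s₁ μ.1 μ.2})
    (x : (Imp μ).State) (k : SLabel Act) (q : (glueB S₁ s₁ np Imp).State) :
    (glueB S₁ s₁ np Imp).must (Sum.inr ⟨μ, x⟩) k q ↔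
      ∃ y, (Imp μ).must x k y ∧ q = Sum.inr ⟨μ, y⟩ := by
  constructor
  · intro h
    rcases q with _ | ⟨μ', y⟩
    · exact h.elim
    · obtain ⟨rfl, hm⟩ := h
      exact ⟨y, hm, rfl⟩
  · rintro ⟨y, hm, rfl⟩
    exact ⟨rfl, hm⟩

lemma glueB_mem {S₁ : WMTS Act} {s₁ : S₁.State}
    {np : {μ : SLabel Act × S₁.State // S₁.must s₁ μ.1 μ.2} → ℤ}
    {Imp : {μ : SLabel Act × S₁.State // S₁.must s₁ μ.1 μ.2} → WMTS Act}
    (hpt : ∀ μ, LabelLE (μ.1.1.1, pointIv (np μ)) μ.1.1)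
    (hImp : ∀ μ, Imp μ ∈ Impl (reroot S₁ μ.1.2)) :
    glueB S₁ s₁ np Imp ∈ Impl (reroot S₁ s₁) := by
  have himp : ∀ μ, (Imp μ).IsImplementation := fun μ => (hImp μ).1
  choose R' hR'init hR'cond using fun μ => (hImp μ).2
  constructor
  · refine ⟨fun s k t => Iff.rfl, ?_⟩
    intro p k q h
    rcases p with _ | ⟨μ, x⟩ <;> rcases q with _ | ⟨μ', y⟩
    · exact h.elim
    · exact h.2 ▸ ⟨np μ', rfl, rfl⟩
    · exact h.elim
    · obtain ⟨rfl, hm⟩ := h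
      exact (himp μ).2 _ _ _ hm
  · refine ⟨fun p s => match p with
      | Sum.inl _ => s = s₁
      | Sum.inr ⟨μ, x⟩ => R' μ x s, rfl, ?_⟩
    intro p s hps
    constructor
    · intro k q hkq
      rcases p with _ | ⟨μ, x⟩ <;> rcases q with _ | ⟨μ', y⟩
      · exact hkq.elim
      · obtain ⟨rfl, rfl⟩ := hkq
        rw [show s = s₁ from hps]
        obtain ⟨ℓ, hlℓ, hmayℓ⟩ := S₁.must_may _ _ _ μ'.2
        exact ⟨ℓ, μ'.1.2, hmayℓ, labelLE_trans (hpt μ') hlℓ, hR'init μ'⟩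
      · exact hkq.elim
      · obtain ⟨rfl, hm⟩ := hkq
        obtain ⟨k₂, t₂, hmay₂, hle₂, hrel₂⟩ :=
          (hR'cond μ x s hps).1 k y (((himp μ).1 _ _ _).mpr hm)
        exact ⟨k₂, t₂, hmay₂, hle₂, hrel₂⟩
    · intro k₂ t₂ h₂
      rcases p with _ | ⟨μ, x⟩
      · rw [show s = s₁ from hps] at h₂
        exact ⟨(k₂.1, pointIv (np ⟨(k₂, t₂), h₂⟩)), Sum.inr ⟨⟨(k₂, t₂), h₂⟩, (Imp _).init⟩,
          ⟨rfl, rfl⟩, hpt ⟨(k₂, t₂), h₂⟩, hR'init ⟨(k₂, t₂), h₂⟩⟩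
      · obtain ⟨k', y, hmust', hle', hrel'⟩ := (hR'cond μ x s hps).2 k₂ t₂ h₂
        exact ⟨k', Sum.inr ⟨μ, y⟩, ⟨rfl, hmust'⟩, hle', hrel'⟩

end Dir2
section Main

variable {Act : Type}

lemma diInit_eq (lam : ℝ≥0∞) (I₁ I₂ : WMTS Act) :
    diInit lam I₁ I₂ = di lam I₁ I₂ I₁.init I₂.init := rfl

lemma partA {lam : ℝ≥0∞} {S₁ S₂ : WMTS Act} (hdet : Deterministic S₂)
    {s₁ t₁ : S₁.State} {s₂ : S₂.State} {k₁ : SLabel Act} (h1 : S₁.may s₁ k₁ t₁) :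
    (⨅ k₂, ⨅ t₂, ⨅ _ : S₂.may s₂ k₂ t₂, dK k₁ k₂ + lam * Gfun lam S₁ S₂ t₁ t₂) ≤
      Gfun lam S₁ S₂ s₁ s₂ := by
  by_cases hex : ∃ ℓ₂ t₂', S₂.may s₂ ℓ₂ t₂' ∧ ℓ₂.1 = k₁.1
  · obtain ⟨ℓ₂, t₂', hℓmay, hℓact⟩ := hex
    refine le_trans (iInf_le_of_le ℓ₂ (iInf_le_of_le t₂' (iInf_le_of_le hℓmay le_rfl))) ?_
    refine le_of_forall_lt fun r hr => ?_
    rw [dK_eq_iSup_pts k₁ ℓ₂,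
      show Gfun lam S₁ S₂ t₁ t₂' =
        ⨆ p : {I : WMTS Act // I ∈ Impl (reroot S₁ t₁)},
          ⨅ I₂' ∈ Impl (reroot S₂ t₂'), diInit lam p.1 I₂' from iSup_subtype',
      ENNReal.mul_iSup] at hr
    obtain ⟨⟨n, hn⟩, ⟨I', hI'⟩, hr'⟩ := exists_lt_add_of_lt_add_iSup hr
    set v' := ⨅ I₂' ∈ Impl (reroot S₂ t₂'), diInit lam I' I₂' with hv'
    set g := glueA S₁ s₁ k₁ n I' with hg
    have hgmem := glueA_mem h1 hn hI'
    have hbig : ∀ I₂, I₂ ∈ Impl (reroot S₂ s₂) →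
        dK ((k₁.1, pointIv n) : SLabel Act) ℓ₂ + lam * v' ≤ diInit lam g I₂ := by
      intro I₂ hI₂
      obtain ⟨hi₂, R₂, hR₂init, hR₂⟩ := hI₂
      rw [diInit_eq]
      refine le_trans ?_ (di_ge_left (show g.must (Sum.inl ())
        ((k₁.1, pointIv n) : SLabel Act) (Sum.inr (Sum.inr I'.init)) from ⟨rfl, rfl⟩))
      refine le_iInf fun k' => le_iInf fun j' => le_iInf fun h' => ?_
      rcases eq_or_ne k'.1 k₁.1 with hk | hk
      · obtain ⟨κ₂, τ₂, hκmay, hκle, hrel⟩ :=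
          (hR₂ _ _ hR₂init).1 k' j' ((hi₂.1 _ _ _).mpr h')
        have hκact : κ₂.1 = k₁.1 := hκle.1.symm.trans hk
        have hm1 : S₂.may s₂ (k₁.1, κ₂.2) τ₂ := by rw [← hκact]; exact hκmay
        have hm2 : S₂.may s₂ (k₁.1, ℓ₂.2) t₂' := by rw [← hℓact]; exact hℓmay
        obtain ⟨hIv, hts⟩ := hdet s₂ k₁.1 κ₂.2 ℓ₂.2 τ₂ t₂' hm1 hm2
        have hκeq : κ₂ = ℓ₂ := Prod.ext (hκact.trans hℓact.symm) hIv
        have hrel' : R₂ j' t₂' := hts ▸ hrel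
        refine add_le_add ?_ (mul_le_mul_right ?_ lam)
        · rw [← hκeq]
          exact dK_mono_right hκle
        · refine le_trans (iInf₂_le (reroot I₂ j') (reroot_mem hi₂ hR₂ hrel')) ?_
          exact di_emb_le (I' := I') (I := g) (J := I₂)
            (fun y => Sum.inr (Sum.inr y)) (glueA_emb S₁ s₁ k₁ n I') I'.init j'
      · rw [dK_top_of_ne (show ((k₁.1, pointIv n) : SLabel Act).1 ≠ k'.1 from hk.symm)]
        simp
    have hfinal : (⨅ I₂ ∈ Impl (reroot S₂ s₂), diInit lam g I₂) ≤ Gfun lam S₁ S₂ s₁ s₂ :=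
      le_iSup₂ (f := fun I₁ _ => ⨅ I₂ ∈ Impl (reroot S₂ s₂), diInit lam I₁ I₂) g hgmem
    exact lt_of_lt_of_le hr' (le_trans (le_iInf₂ hbig) hfinal)
  · refine le_trans le_top (le_of_forall_lt fun r hr => ?_)
    obtain ⟨n, hn0⟩ := exists_pt_label k₁.1 k₁.2
    have hn : LabelLE ((k₁.1, pointIv n) : SLabel Act) k₁ := hn0
    set g := glueA S₁ s₁ k₁ n (mustClosure (reroot S₁ t₁)) with hg
    have hgmem := glueA_mem h1 hn (mustClosure_mem (reroot S₁ t₁))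
    have hbig : ∀ I₂, I₂ ∈ Impl (reroot S₂ s₂) → (⊤ : ℝ≥0∞) ≤ diInit lam g I₂ := by
      intro I₂ hI₂
      obtain ⟨hi₂, R₂, hR₂init, hR₂⟩ := hI₂
      rw [diInit_eq]
      refine le_trans ?_ (di_ge_left (show g.must (Sum.inl ())
        ((k₁.1, pointIv n) : SLabel Act)
        (Sum.inr (Sum.inr (mustClosure (reroot S₁ t₁)).init)) from ⟨rfl, rfl⟩))
      refine le_iInf fun k' => le_iInf fun j' => le_iInf fun h' => ?_
      obtain ⟨κ₂, τ₂, hκmay, hκle, _⟩ :=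
        (hR₂ _ _ hR₂init).1 k' j' ((hi₂.1 _ _ _).mpr h')
      have hne : k'.1 ≠ k₁.1 := fun hceq =>
        hex ⟨κ₂, τ₂, hκmay, hκle.1.symm.trans hceq⟩
      rw [dK_top_of_ne (show ((k₁.1, pointIv n) : SLabel Act).1 ≠ k'.1 from hne.symm)]
      simp
    have hfinal : (⨅ I₂ ∈ Impl (reroot S₂ s₂), diInit lam g I₂) ≤ Gfun lam S₁ S₂ s₁ s₂ :=
      le_iSup₂ (f := fun I₁ _ => ⨅ I₂ ∈ Impl (reroot S₂ s₂), diInit lam I₁ I₂) g hgmem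
    exact lt_of_lt_of_le hr (le_trans (le_iInf₂ hbig) hfinal)

lemma partB {lam : ℝ≥0∞} {S₁ S₂ : WMTS Act}
    {s₁ : S₁.State} {s₂ t₂ : S₂.State} {k₂ : SLabel Act} (h2 : S₂.must s₂ k₂ t₂) :
    (⨅ k₁, ⨅ t₁, ⨅ _ : S₁.must s₁ k₁ t₁, dK k₁ k₂ + lam * Gfun lam S₁ S₂ t₁ t₂) ≤
      Gfun lam S₁ S₂ s₁ s₂ := by
  refine le_of_forall_lt fun r hr => ?_
  obtain ⟨r', hrr', hr'lt⟩ := exists_between hr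
  have hch : ∀ μ : {μ : SLabel Act × S₁.State // S₁.must s₁ μ.1 μ.2},
      ∃ (n : ℤ) (I' : WMTS Act), LabelLE ((μ.1.1.1, pointIv n) : SLabel Act) μ.1.1 ∧
        I' ∈ Impl (reroot S₁ μ.1.2) ∧
        r' < dK ((μ.1.1.1, pointIv n) : SLabel Act) k₂ +
          lam * ⨅ I₂' ∈ Impl (reroot S₂ t₂), diInit lam I' I₂' := by
    intro μ
    have hμ : r' < dK μ.1.1 k₂ + lam * Gfun lam S₁ S₂ μ.1.2 t₂ :=
      lt_of_lt_of_le hr'lt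
        (iInf_le_of_le μ.1.1 (iInf_le_of_le μ.1.2 (iInf_le_of_le μ.2 le_rfl)))
    rw [dK_eq_iSup_pts μ.1.1 k₂,
      show Gfun lam S₁ S₂ μ.1.2 t₂ =
        ⨆ p : {I : WMTS Act // I ∈ Impl (reroot S₁ μ.1.2)},
          ⨅ I₂' ∈ Impl (reroot S₂ t₂), diInit lam p.1 I₂' from iSup_subtype',
      ENNReal.mul_iSup] at hμ
    obtain ⟨⟨n, hn⟩, ⟨I', hI'⟩, h⟩ := exists_lt_add_of_lt_add_iSup hμ
    exact ⟨n, I', hn, hI', h⟩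
  choose np Imp hpt hImp hlt using hch
  set g := glueB S₁ s₁ np Imp with hg
  have hgmem := glueB_mem hpt hImp
  have hbig : ∀ I₂, I₂ ∈ Impl (reroot S₂ s₂) → r' ≤ diInit lam g I₂ := by
    intro I₂ hI₂
    obtain ⟨hi₂, R₂, hR₂init, hR₂⟩ := hI₂
    obtain ⟨k', j', h'must, hk'le, hrel⟩ := (hR₂ _ _ hR₂init).2 k₂ t₂ h2
    rw [diInit_eq]
    refine le_trans ?_ (di_ge_right h'must)
    refine le_iInf fun kk => le_iInf fun qq => le_iInf fun htr => ?_
    rcases qq with _ | ⟨μ, x⟩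
    · exact absurd htr id
    · obtain ⟨rfl, rfl⟩ := htr
      refine le_of_lt (lt_of_lt_of_le (hlt μ) (add_le_add ?_ (mul_le_mul_right ?_ lam)))
      · exact dK_mono_right hk'le
      · refine le_trans (iInf₂_le (reroot I₂ j') (reroot_mem hi₂ hR₂ hrel)) ?_
        exact di_emb_le (I' := Imp μ) (I := g) (J := I₂)
          (fun y => Sum.inr ⟨μ, y⟩) (glueB_emb S₁ s₁ np Imp μ) (Imp μ).init j'
  have hfinal : (⨅ I₂ ∈ Impl (reroot S₂ s₂), diInit lam g I₂) ≤ Gfun lam S₁ S₂ s₁ s₂ :=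
    le_iSup₂ (f := fun I₁ _ => ⨅ I₂ ∈ Impl (reroot S₂ s₂), diInit lam I₁ I₂) g hgmem
  exact lt_of_lt_of_le hrr' (le_trans (le_iInf₂ hbig) hfinal)

lemma dm_le_dt {lam : ℝ≥0∞} {S₁ S₂ : WMTS Act} (hdet : Deterministic S₂) :
    dmInit lam S₁ S₂ ≤ dt lam S₁ S₂ := by
  have hpre : dmF lam S₁ S₂ (Gfun lam S₁ S₂) ≤ Gfun lam S₁ S₂ := by
    intro s₁ s₂
    simp only [dmF, OrderHom.coe_mk]
    refine max_le ?_ ?_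
    · exact iSup_le fun k₁ => iSup_le fun t₁ => iSup_le fun h1 => partA hdet h1
    · exact iSup_le fun k₂ => iSup_le fun t₂ => iSup_le fun h2 => partB h2
  exact (dm_le_of_prefixed hpre S₁.init S₂.init).trans_eq
    (rfl : Gfun lam S₁ S₂ S₁.init S₂.init = dt lam S₁ S₂)

lemma dt_le_dm {lam : ℝ≥0∞} (hlam0 : 0 < lam) (hlam1 : lam < 1) (S₁ S₂ : WMTS Act) :
    dt lam S₁ S₂ ≤ dmInit lam S₁ S₂ := by
  refine iSup_le fun I₁ => iSup_le fun hI₁ => ?_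
  obtain ⟨himpl, R, hinit, hR⟩ := hI₁
  have h1 : dm lam I₁ S₂ I₁.init S₂.init ≤ dmInit lam S₁ S₂ :=
    dm_le_of_refines hR hinit S₂.init
  rcases eq_or_ne (dmInit lam S₁ S₂) ⊤ with htop | htop
  · rw [htop]; exact le_top
  have hD : dm lam I₁ S₂ I₁.init S₂.init ≠ ⊤ := fun h => htop (top_unique (h ▸ h1))
  have hmain : (⨅ I₂ ∈ Impl S₂, diInit lam I₁ I₂) ≤ dm lam I₁ S₂ I₁.init S₂.init := by
    refine ENNReal.le_of_forall_pos_le_add fun ε hε _ => ?_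
    obtain ⟨hmem, hb⟩ := approxImpl_spec hlam0 hlam1 himpl hD
      (εe := (ε : ℝ≥0∞)) (by exact_mod_cast hε.ne') ENNReal.coe_ne_top
    exact le_trans (iInf₂_le _ hmem) hb
  exact hmain.trans h1

end Main
/-- for deterministic S₂, thorough and modal refinement
distances coincide. -/
theorem dt_eq_dm_of_deterministic {Act : Type} (lam : ℝ≥0∞) (hlam0 : 0 < lam)
    (hlam1 : lam < 1) (S₁ S₂ : WMTS Act)
    (hc₁ : CompactlyBranching lam S₁) (hc₂ : CompactlyBranching lam S₂)
    (hdet : Deterministic S₂) :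
    dt lam S₁ S₂ = dmInit lam S₁ S₂ :=
  le_antisymm (dt_le_dm hlam0 hlam1 S₁ S₂) (dm_le_dt hdet)

end WMTSQuant
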